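/- Let γ_1 = 1 and let γ_2, …, γ_m be integers, and set Γ_m(x) = γ_1 x^{m−1} + γ_2 x^{m−2} + ⋯ + γ_m. If Γ_m(r) > 0, then there exists a monic polynomial p(x) with integer coefficients, divisible by P(x), of some degree N ≥ m − 1, such that the coefficient of x^{N−i+1} in p equals γ_i for 1 ≤ i ≤ m and the coefficient of x^j in p is ≤ 0 for every j ≤ N − m. -/

import Mathlib

open Polynomial


open Polynomial Filter Topology

lemma contraction_tendsto_zero (q : ℂ) (hq : ‖q‖ < 1) (e y : ℕ → ℂ)
    (he : Filter.Tendsto e Filter.atTop (nhds 0))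
    (hy : ∀ T, y (T + 1) = q * y T + e T) :
    Filter.Tendsto y Filter.atTop (nhds 0) := by
  rw [NormedAddCommGroup.tendsto_nhds_zero]
  intro ε hε
  have ha0 : (0:ℝ) ≤ ‖q‖ := norm_nonneg q
  have ha1 : (0:ℝ) < 1 - ‖q‖ := by linarith
  have hδ : 0 < ε * (1 - ‖q‖) / 2 := by positivity
  obtain ⟨T0, hT0⟩ : ∃ T0, ∀ T ≥ T0, ‖e T‖ ≤ ε * (1 - ‖q‖) / 2 := by
    have := (NormedAddCommGroup.tendsto_nhds_zero.mp he) (ε * (1 - ‖q‖) / 2) hδ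
    obtain ⟨T0, h⟩ := eventually_atTop.mp this
    exact ⟨T0, fun T hT => (h T hT).le⟩
  have key : ∀ n, ‖y (T0 + n)‖ ≤ ‖q‖ ^ n * ‖y T0‖ + ε / 2 := by
    intro n
    induction n with
    | zero => simp; nlinarith
    | succ n ih =>
      have h1 : y (T0 + (n+1)) = q * y (T0 + n) + e (T0 + n) := by
        rw [← hy (T0 + n)]; ring_nf
      calc ‖y (T0 + (n+1))‖ ≤ ‖q‖ * ‖y (T0 + n)‖ + ‖e (T0 + n)‖ := by
            rw [h1]; exact (norm_add_le _ _).trans (by rw [norm_mul])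
        _ ≤ ‖q‖ * (‖q‖ ^ n * ‖y T0‖ + ε / 2) + ε * (1 - ‖q‖) / 2 := by
            have := hT0 (T0 + n) (by omega)
            have h2 : ‖q‖ * ‖y (T0+n)‖ ≤ ‖q‖ * (‖q‖ ^ n * ‖y T0‖ + ε / 2) :=
              mul_le_mul_of_nonneg_left ih ha0
            linarith
        _ ≤ ‖q‖ ^ (n+1) * ‖y T0‖ + ε / 2 := by rw [pow_succ]; nlinarith [pow_nonneg ha0 n, norm_nonneg (y T0)]
  have hpow : Filter.Tendsto (fun n => ‖q‖ ^ n * ‖y T0‖) Filter.atTop (nhds 0) := by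
    simpa using (tendsto_pow_atTop_nhds_zero_of_lt_one ha0 hq).mul_const ‖y T0‖
  obtain ⟨n1, hn1⟩ : ∃ n1, ∀ n ≥ n1, ‖q‖ ^ n * ‖y T0‖ < ε / 2 := by
    have := (NormedAddCommGroup.tendsto_nhds_zero.mp hpow) (ε/2) (by linarith)
    obtain ⟨n1, h⟩ := eventually_atTop.mp this
    refine ⟨n1, fun n hn => ?_⟩
    have := h n hn
    have h0 : (0:ℝ) ≤ ‖q‖ ^ n * ‖y T0‖ := by positivity
    rwa [Real.norm_eq_abs, abs_of_nonneg h0] at this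
  rw [eventually_atTop]
  refine ⟨T0 + n1, fun T hT => ?_⟩
  have hTeq : T = T0 + (T - T0) := by omega
  have h1 := key (T - T0)
  have h2 := hn1 (T - T0) (by omega)
  rw [← hTeq] at h1
  calc ‖y T‖ ≤ ‖q‖ ^ (T - T0) * ‖y T0‖ + ε / 2 := h1
    _ < ε / 2 + ε / 2 := by linarith
    _ = ε := by ring

lemma firstorder_tendsto (q : ℂ) (hq : ‖q‖ < 1) (h : ℕ → ℂ) (L : ℂ) (x : ℕ → ℂ)
    (hx : ∀ T, x (T + 1) = q * x T + h T) (hh : Filter.Tendsto h Filter.atTop (nhds L)) :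
    Filter.Tendsto x Filter.atTop (nhds (L / (1 - q))) := by
  have hq1 : (1 : ℂ) - q ≠ 0 := by
    intro h0
    have : q = 1 := by linear_combination -h0
    rw [this] at hq; simp at hq
  set cc := L / (1 - q) with hcc
  have hmain : Filter.Tendsto (fun T => x T - cc) Filter.atTop (nhds 0) := by
    apply contraction_tendsto_zero q hq (fun T => h T - L)
    · simpa using hh.sub_const L
    · intro T
      have : cc * (1 - q) = L := by rw [hcc, div_mul_cancel₀ _ hq1]
      rw [hx T]; ring_nf; linear_combination -this
  have := hmain.add_const cc
  simpa using this
lemma geom_div_tendsto (r : ℝ) (hr : 0 < r) (z cc : ℂ) (hz : ‖z‖ < r) (w g : ℕ → ℂ)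
    (hw : ∀ T, w (T + 1) = z * w T + g T)
    (hg : Filter.Tendsto (fun T => g T / (r:ℂ) ^ T) Filter.atTop (nhds cc)) :
    Filter.Tendsto (fun T => w T / (r:ℂ) ^ T) Filter.atTop (nhds (cc / ((r:ℂ) - z))) := by
  have hrc : (r:ℂ) ≠ 0 := by
    simp only [ne_eq, Complex.ofReal_eq_zero]; exact hr.ne'
  have hnr : ‖(r:ℂ)‖ = r := by
    rw [Complex.norm_real, Real.norm_eq_abs, abs_of_pos hr]
  have hzr : (r:ℂ) - z ≠ 0 := by
    intro h0
    have : z = (r:ℂ) := by linear_combination -h0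
    rw [this, hnr] at hz; exact lt_irrefl _ hz
  have hqn : ‖z / (r:ℂ)‖ < 1 := by
    rw [norm_div, hnr, div_lt_one hr]; exact hz
  have hx : ∀ T, w (T+1) / (r:ℂ) ^ (T+1) = (z / (r:ℂ)) * (w T / (r:ℂ)^T) + (g T / (r:ℂ)^(T+1)) := by
    intro T
    rw [hw T, pow_succ]
    field_simp
  have hh : Filter.Tendsto (fun T => g T / (r:ℂ) ^ (T+1)) Filter.atTop (nhds (cc / (r:ℂ))) := by
    have := hg.div_const ((r:ℂ))
    convert this using 2 with T
    rw [pow_succ]; field_simp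
  have := firstorder_tendsto (z / (r:ℂ)) hqn _ _ (fun T => w T / (r:ℂ) ^ T) hx hh
  have hval : cc / (r:ℂ) / (1 - z / (r:ℂ)) = cc / ((r:ℂ) - z) := by
    field_simp
  rw [hval] at this
  exact this

noncomputable def shiftE : Module.End ℂ (ℕ → ℂ) where
  toFun s := fun T => s (T + 1)
  map_add' s t := rfl
  map_smul' a s := rfl

lemma shiftE_pow (n : ℕ) (s : ℕ → ℂ) (T : ℕ) : (shiftE ^ n) s T = s (T + n) := by
  induction n generalizing s T with
  | zero => rfl
  | succ n ih =>
    rw [pow_succ]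
    have : (shiftE ^ n * shiftE) s = (shiftE ^ n) (shiftE s) := rfl
    rw [this, ih]
    rfl

lemma aeval_shiftE_X_sub_C (z : ℂ) (s : ℕ → ℂ) (T : ℕ) :
    (Polynomial.aeval shiftE (X - C z)) s T = s (T + 1) - z * s T := by
  have h : (Polynomial.aeval shiftE (X - C z) : Module.End ℂ (ℕ → ℂ)) = shiftE - z • 1 := by
    simp [map_sub, Polynomial.aeval_X, Polynomial.aeval_C, Algebra.algebraMap_eq_smul_one]
  rw [h]
  simp only [LinearMap.sub_apply, LinearMap.smul_apply, Module.End.one_apply,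
    Pi.sub_apply, Pi.smul_apply, smul_eq_mul]
  rfl

lemma lemmaB (r : ℝ) (hr : 0 < r) :
    ∀ (n : ℕ) (Q : ℂ[X]), Q.Monic → Q.natDegree = n → (∀ z ∈ Q.roots, ‖z‖ < r) →
    ∀ (s : ℕ → ℂ) (cc : ℂ),
      Filter.Tendsto (fun T => (Polynomial.aeval shiftE Q) s T / (r:ℂ) ^ T) Filter.atTop (nhds cc) →
      Filter.Tendsto (fun T => s T / (r:ℂ) ^ T) Filter.atTop (nhds (cc / Q.eval (r:ℂ))) := by
  intro n
  induction n with
  | zero =>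
    intro Q hQm hQd hroots s cc hten
    have hQ1 : Q = 1 := hQm.natDegree_eq_zero.mp hQd
    subst hQ1
    simpa using hten
  | succ n ih =>
    intro Q hQm hQd hroots s cc hten
    obtain ⟨z, hz⟩ : ∃ z, Q.IsRoot z := Complex.exists_root (by
      rw [Polynomial.degree_eq_natDegree hQm.ne_zero, hQd]; exact_mod_cast Nat.succ_pos n)
    set Q2 := Q /ₘ (X - C z) with hQ2def
    have hfac : (X - C z) * Q2 = Q := Polynomial.mul_divByMonic_eq_iff_isRoot.mpr hz
    have hQ2m : Q2.Monic := (Polynomial.monic_X_sub_C z).of_mul_monic_left (by rw [hfac]; exact hQm)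
    have hQ2d : Q2.natDegree = n := by
      have := Polynomial.natDegree_mul (Polynomial.X_sub_C_ne_zero z) hQ2m.ne_zero
      rw [hfac, hQd, Polynomial.natDegree_X_sub_C] at this
      omega
    have hQ2roots : ∀ z' ∈ Q2.roots, ‖z'‖ < r := by
      intro z' hz'
      apply hroots
      have hdvd : Q2 ∣ Q := ⟨X - C z, by rw [← hfac]; ring⟩
      exact Multiset.mem_of_le (Polynomial.roots.le_of_dvd hQm.ne_zero hdvd) hz'
    have hzr : ‖z‖ < r := hroots z (by
      rw [Polynomial.mem_roots hQm.ne_zero]; exact hz)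
    set w := (Polynomial.aeval shiftE Q2) s with hwdef
    have hcomp : ∀ T, (Polynomial.aeval shiftE Q) s T = w (T + 1) - z * w T := by
      intro T
      rw [← hfac, map_mul]
      have : (Polynomial.aeval shiftE (X - C z) * Polynomial.aeval shiftE Q2) s
          = (Polynomial.aeval shiftE (X - C z)) w := rfl
      rw [this, aeval_shiftE_X_sub_C]
    have hw : ∀ T, w (T + 1) = z * w T + ((Polynomial.aeval shiftE Q) s T) := by
      intro T; rw [hcomp T]; ring
    have hwten := geom_div_tendsto r hr z cc hzr w _ hw hten
    have := ih Q2 hQ2m hQ2d hQ2roots s _ hwten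
    convert this using 2
    rw [← hfac, Polynomial.eval_mul]
    have h1 : ((r:ℂ) - z) ≠ 0 := by
      intro h0
      have : z = (r:ℂ) := by linear_combination -h0
      rw [this] at hzr
      rw [Complex.norm_real, Real.norm_eq_abs, abs_of_pos hr] at hzr
      exact lt_irrefl _ hzr
    simp [Polynomial.eval_sub, Polynomial.eval_X, Polynomial.eval_C]
    rw [div_div]
lemma pow_gcd_eq_pair (z w : ℂ) (hz : z ≠ 0) (hw : w ≠ 0) (a b : ℕ)
    (ha : z ^ a = w ^ a) (hb : z ^ b = w ^ b) :
    z ^ Nat.gcd a b = w ^ Nat.gcd a b := by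
  have key : (z : ℂ) ^ ((Nat.gcd a b : ℤ)) = w ^ ((Nat.gcd a b : ℤ)) := by
    rw [Nat.gcd_eq_gcd_ab a b]
    rw [zpow_add₀ hz, zpow_add₀ hw]
    rw [zpow_mul, zpow_mul, zpow_mul, zpow_mul]
    simp only [zpow_natCast, ha, hb]
  rw [zpow_natCast, zpow_natCast] at key
  exact key

lemma pow_gcd_eq (z w : ℂ) (hz : z ≠ 0) (hw : w ≠ 0) (S : Finset ℕ)
    (hS : ∀ i ∈ S, z ^ i = w ^ i) :
    z ^ (S.gcd id) = w ^ (S.gcd id) := by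
  classical
  induction S using Finset.induction with
  | empty => simp
  | @insert a s hnotmem ih =>
    rw [Finset.gcd_insert]
    have h1 : z ^ a = w ^ a := hS a (Finset.mem_insert_self a s)
    have h2 : z ^ (s.gcd id) = w ^ (s.gcd id) := ih (fun i hi => hS i (Finset.mem_insert_of_mem hi))
    have h3 : GCDMonoid.gcd (id a) (s.gcd id) = Nat.gcd a (s.gcd id) := rfl
    rw [h3]
    exact pow_gcd_eq_pair z w hz hw a (s.gcd id) h1 h2

lemma re_eq_norm_imp (u : ℂ) (h : u.re = ‖u‖) : u = (‖u‖ : ℂ) := by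
  have h2 : ‖u‖ ^ 2 = u.re ^ 2 + u.im ^ 2 := by
    rw [Complex.sq_norm, Complex.normSq_apply]; ring
  have him2 : u.im ^ 2 = 0 := by nlinarith [norm_nonneg u]
  have him : u.im = 0 := by
    have := sq_nonneg u.im
    nlinarith [sq_abs u.im]
  apply Complex.ext
  · simp [← h]
  · simp [him]

lemma dominance (k : ℕ) (hk : 1 ≤ k) (c : ℕ → ℕ) (hck : 0 < c k)
    (hgcd : Finset.gcd ((Finset.Icc 1 k).filter fun m => c m ≠ 0) id = 1)
    (r : ℝ) (hr : 0 < r)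
    (hrk : r ^ k = ∑ i ∈ Finset.Icc 1 k, (c i : ℝ) * r ^ (k - i))
    (z : ℂ) (hzk : z ^ k = ∑ i ∈ Finset.Icc 1 k, (c i : ℂ) * z ^ (k - i))
    (hzr : z ≠ (r : ℂ)) : ‖z‖ < r := by
  have hkmem : k ∈ Finset.Icc 1 k := by simp [hk]
  have hz0 : z ≠ 0 := by
    intro h0
    rw [h0] at hzk
    rw [zero_pow (by omega : k ≠ 0)] at hzk
    rw [Finset.sum_eq_single k] at hzk
    · rw [Nat.sub_self, pow_zero, mul_one] at hzk
      have : c k = 0 := by exact_mod_cast hzk.symm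
      omega
    · intro i hi hik
      have : k - i ≠ 0 := by simp [Finset.mem_Icc] at hi; omega
      rw [zero_pow this]; ring
    · intro h; exact absurd hkmem h
  have hρ0 : (0:ℝ) < ‖z‖ := norm_pos_iff.mpr hz0
  set ρ := ‖z‖ with hρ
  have htri : ρ ^ k ≤ ∑ i ∈ Finset.Icc 1 k, (c i : ℝ) * ρ ^ (k - i) := by
    calc ρ ^ k = ‖z ^ k‖ := by rw [norm_pow]
      _ = ‖∑ i ∈ Finset.Icc 1 k, (c i : ℂ) * z ^ (k - i)‖ := by rw [hzk]
      _ ≤ ∑ i ∈ Finset.Icc 1 k, ‖(c i : ℂ) * z ^ (k - i)‖ := norm_sum_le _ _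
      _ = ∑ i ∈ Finset.Icc 1 k, (c i : ℝ) * ρ ^ (k - i) := by
          apply Finset.sum_congr rfl
          intro i _
          rw [norm_mul, norm_pow, Complex.norm_natCast, ← hρ]
  have hle : ρ ≤ r := by
    by_contra hlt
    push_neg at hlt
    have hterm : ∀ i ∈ Finset.Icc 1 k,
        (c i : ℝ) * ρ ^ (k - i) * r ^ k ≤ (c i : ℝ) * r ^ (k - i) * ρ ^ k := by
      intro i hi
      simp only [Finset.mem_Icc] at hi
      have h1 : r ^ k = r ^ (k - i) * r ^ i := by rw [← pow_add]; congr 1; omega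
      have h2 : ρ ^ k = ρ ^ (k - i) * ρ ^ i := by rw [← pow_add]; congr 1; omega
      rw [h1, h2]
      have hri : r ^ i ≤ ρ ^ i := pow_le_pow_left₀ hr.le hlt.le i
      have hb : (0:ℝ) ≤ (c i : ℝ) * r ^ (k - i) * ρ ^ (k - i) := by positivity
      calc (c i : ℝ) * ρ ^ (k - i) * (r ^ (k - i) * r ^ i)
          = ((c i : ℝ) * r ^ (k - i) * ρ ^ (k - i)) * r ^ i := by ring
        _ ≤ ((c i : ℝ) * r ^ (k - i) * ρ ^ (k - i)) * ρ ^ i := by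
            exact mul_le_mul_of_nonneg_left hri hb
        _ = (c i : ℝ) * r ^ (k - i) * (ρ ^ (k - i) * ρ ^ i) := by ring
    have hstrict : (c k : ℝ) * ρ ^ (k - k) * r ^ k < (c k : ℝ) * r ^ (k - k) * ρ ^ k := by
      simp only [Nat.sub_self, pow_zero, mul_one]
      have hrk' : r ^ k < ρ ^ k := pow_lt_pow_left₀ hlt hr.le (by omega)
      have hc : (0:ℝ) < (c k : ℝ) := by exact_mod_cast hck
      nlinarith
    have h3 : ∑ i ∈ Finset.Icc 1 k, (c i : ℝ) * ρ ^ (k - i) * r ^ k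
        < ∑ i ∈ Finset.Icc 1 k, (c i : ℝ) * r ^ (k - i) * ρ ^ k :=
      Finset.sum_lt_sum hterm ⟨k, hkmem, hstrict⟩
    have h4 : ∑ i ∈ Finset.Icc 1 k, (c i : ℝ) * r ^ (k - i) * ρ ^ k = r ^ k * ρ ^ k := by
      rw [← Finset.sum_mul, ← hrk]
    have h5 : ρ ^ k * r ^ k ≤ ∑ i ∈ Finset.Icc 1 k, (c i : ℝ) * ρ ^ (k - i) * r ^ k := by
      rw [← Finset.sum_mul]
      exact mul_le_mul_of_nonneg_right htri (by positivity)
    nlinarith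
  rcases lt_or_eq_of_le hle with h | heq
  · exact h
  exfalso
  have hrc0 : ((r:ℝ) : ℂ) ≠ 0 := by
    simp only [ne_eq, Complex.ofReal_eq_zero]; exact hr.ne'
  have hnzk : ‖z ^ k‖ = r ^ k := by rw [norm_pow, ← heq]
  set u : ℕ → ℂ := fun i => z ^ (k - i) * (starRingEnd ℂ) (z ^ k) with hu
  have h3 : (((r ^ k) ^ 2 : ℝ) : ℂ) = ∑ i ∈ Finset.Icc 1 k, (c i : ℂ) * u i := by
    have h1 : z ^ k * (starRingEnd ℂ) (z ^ k) = ((‖z ^ k‖ : ℝ) : ℂ) ^ 2 := Complex.mul_conj' _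
    calc (((r ^ k) ^ 2 : ℝ) : ℂ) = ((‖z ^ k‖ : ℝ) : ℂ) ^ 2 := by rw [hnzk]; push_cast; ring
      _ = z ^ k * (starRingEnd ℂ) (z ^ k) := h1.symm
      _ = (∑ i ∈ Finset.Icc 1 k, (c i : ℂ) * z ^ (k - i)) * (starRingEnd ℂ) (z ^ k) := by
          rw [← hzk]
      _ = ∑ i ∈ Finset.Icc 1 k, (c i : ℂ) * u i := by
          rw [Finset.sum_mul]
          apply Finset.sum_congr rfl
          intro i _
          rw [hu]; ring
  have hmain : ((r ^ k) ^ 2 : ℝ) = ∑ i ∈ Finset.Icc 1 k, (c i : ℝ) * (u i).re := by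
    have h4 := congrArg Complex.re h3
    simp only [Complex.ofReal_re, Complex.re_sum, Complex.mul_re, Complex.natCast_re,
      Complex.natCast_im, zero_mul, sub_zero] at h4
    exact h4
  have hnu : ∀ i, ‖u i‖ = ρ ^ (k - i) * r ^ k := by
    intro i
    simp only [hu]
    rw [norm_mul, RCLike.norm_conj, norm_pow, hnzk, ← hρ]
  have hbound : ∀ i ∈ Finset.Icc 1 k, (u i).re ≤ r ^ (k - i) * r ^ k := by
    intro i _
    have h1 : (u i).re ≤ ‖u i‖ := by
      exact Complex.re_le_norm _
    rw [hnu i, heq] at h1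
    exact h1
  have hsum_ub : ∑ i ∈ Finset.Icc 1 k, (c i : ℝ) * (r ^ (k - i) * r ^ k) = (r ^ k) ^ 2 := by
    have : ∑ i ∈ Finset.Icc 1 k, (c i : ℝ) * (r ^ (k - i) * r ^ k)
        = (∑ i ∈ Finset.Icc 1 k, (c i : ℝ) * r ^ (k - i)) * r ^ k := by
      rw [Finset.sum_mul]; apply Finset.sum_congr rfl; intro i _; ring
    rw [this, ← hrk]; ring
  have hzero : ∀ i ∈ Finset.Icc 1 k, (c i : ℝ) * (r ^ (k - i) * r ^ k - (u i).re) = 0 := by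
    apply (Finset.sum_eq_zero_iff_of_nonneg ?_).mp
    · have hsplit : ∑ i ∈ Finset.Icc 1 k, (c i : ℝ) * (r ^ (k - i) * r ^ k - (u i).re)
          = ∑ i ∈ Finset.Icc 1 k, (c i : ℝ) * (r ^ (k - i) * r ^ k)
            - ∑ i ∈ Finset.Icc 1 k, (c i : ℝ) * (u i).re := by
        rw [← Finset.sum_sub_distrib]
        apply Finset.sum_congr rfl; intro i _; ring
      rw [hsplit, hsum_ub, ← hmain]; ring
    · intro i hi
      have h1 := hbound i hi
      have h2 : (0:ℝ) ≤ (c i : ℝ) := Nat.cast_nonneg _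
      nlinarith
  have hueq : ∀ i ∈ Finset.Icc 1 k, c i ≠ 0 → u i = ((r ^ (k - i) * r ^ k : ℝ) : ℂ) := by
    intro i hi hci
    have h := hzero i hi
    have hc : (0:ℝ) < (c i : ℝ) := by exact_mod_cast Nat.pos_of_ne_zero hci
    have hre : (u i).re = r ^ (k - i) * r ^ k := by
      rcases mul_eq_zero.mp h with h' | h'
      · exact absurd h' hc.ne'
      · have := sub_eq_zero.mp h'
        linarith [this]
    have hreq : (u i).re = ‖u i‖ := by rw [hre, hnu i, heq]
    have := re_eq_norm_imp (u i) hreq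
    rw [hnu i, heq] at this
    exact this
  have hzkreal : z ^ k = ((r ^ k : ℝ) : ℂ) := by
    have hk' := hueq k hkmem (by omega)
    have h1 : (starRingEnd ℂ) (z ^ k) = ((r ^ k : ℝ) : ℂ) := by
      simp only [hu] at hk'
      simpa [Nat.sub_self] using hk'
    have h2 := congrArg (starRingEnd ℂ) h1
    simpa using h2
  have hrkc0 : ((r ^ k : ℝ) : ℂ) ≠ 0 := by
    simp only [ne_eq, Complex.ofReal_eq_zero]
    positivity
  have hzi : ∀ i ∈ Finset.Icc 1 k, c i ≠ 0 → z ^ i = ((r:ℝ) : ℂ) ^ i := by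
    intro i hi hci
    have h := hueq i hi hci
    simp only [hu] at h
    have hconj : (starRingEnd ℂ) (z ^ k) = ((r ^ k : ℝ) : ℂ) := by
      rw [hzkreal]; simp
    rw [hconj] at h
    have hzsub : z ^ (k - i) = ((r ^ (k - i) : ℝ) : ℂ) := by
      apply mul_right_cancel₀ hrkc0
      rw [h]; push_cast; ring
    have hik : i ≤ k := (Finset.mem_Icc.mp hi).2
    have hmul : z ^ i * z ^ (k - i) = z ^ k := by rw [← pow_add]; congr 1; omega
    have hz_sub_ne : ((r ^ (k - i) : ℝ) : ℂ) ≠ 0 := by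
      simp only [ne_eq, Complex.ofReal_eq_zero]; positivity
    apply mul_right_cancel₀ hz_sub_ne
    calc z ^ i * ((r ^ (k - i) : ℝ) : ℂ) = z ^ k := by rw [← hzsub, hmul]
      _ = ((r ^ k : ℝ) : ℂ) := hzkreal
      _ = ((r:ℝ) : ℂ) ^ i * ((r ^ (k - i) : ℝ) : ℂ) := by
          push_cast
          rw [← pow_add]
          congr 1
          omega
  have hfin := pow_gcd_eq z ((r:ℝ) : ℂ) hz0 hrc0
    ((Finset.Icc 1 k).filter fun m => c m ≠ 0)
    (fun i hi => by
      have hm := Finset.mem_filter.mp hi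
      exact hzi i hm.1 hm.2)
  rw [hgcd] at hfin
  simp only [pow_one] at hfin
  exact hzr hfin
lemma aeval_shiftE_X_pow (n : ℕ) (s : ℕ → ℂ) (T : ℕ) :
    (Polynomial.aeval shiftE (X ^ n : ℂ[X])) s T = s (T + n) := by
  rw [map_pow, Polynomial.aeval_X]
  exact shiftE_pow n s T

lemma aeval_shiftE_C_mul_X_pow (a : ℂ) (n : ℕ) (s : ℕ → ℂ) (T : ℕ) :
    (Polynomial.aeval shiftE (C a * X ^ n : ℂ[X])) s T = a * s (T + n) := by
  rw [map_mul, Polynomial.aeval_C, map_pow, Polynomial.aeval_X]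
  have : ((algebraMap ℂ (Module.End ℂ (ℕ → ℂ))) a * shiftE ^ n) s = a • ((shiftE ^ n) s) := by
    simp [Algebra.algebraMap_eq_smul_one, Module.End.mul_apply]
  rw [this]
  simp only [Pi.smul_apply, smul_eq_mul]
  rw [shiftE_pow]

set_option maxHeartbeats 1000000 in
theorem derived_recurrence_integer
    (k : ℕ) (hk : 1 ≤ k) (c : ℕ → ℕ) (hck : 0 < c k)
    (hgcd : Finset.gcd ((Finset.Icc 1 k).filter fun m => c m ≠ 0) id = 1)
    (P : Polynomial ℤ)
    (hP : P = X ^ k - ∑ i ∈ Finset.Icc 1 k, C (c i : ℤ) * X ^ (k - i))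
    (r : ℝ) (hr : 0 < r) (hroot : Polynomial.aeval r P = 0)
    (m : ℕ) (hm : 1 ≤ m) (γ : ℕ → ℤ) (hγ1 : γ 1 = 1)
    (hΓ : 0 < ∑ i ∈ Finset.Icc 1 m, (γ i : ℝ) * r ^ (m - i)) :
    ∃ p : Polynomial ℤ, ∃ N : ℕ, m - 1 ≤ N ∧ p.Monic ∧ p.natDegree = N ∧ P ∣ p ∧
      (∀ i, 1 ≤ i → i ≤ m → p.coeff (N + 1 - i) = γ i) ∧
      (∀ j, j + m ≤ N → p.coeff j ≤ 0) := by
  classical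
  have hkmem : k ∈ Finset.Icc 1 k := by simp [hk]
  -- degree facts about P
  have hdegsum : (∑ i ∈ Finset.Icc 1 k, C (c i : ℤ) * X ^ (k - i)).degree < (k : WithBot ℕ) := by
    apply lt_of_le_of_lt (Polynomial.degree_sum_le _ _)
    rw [Finset.sup_lt_iff (by exact WithBot.bot_lt_coe k)]
    intro i hi
    apply lt_of_le_of_lt (Polynomial.degree_C_mul_X_pow_le _ _)
    have : k - i < k := by simp only [Finset.mem_Icc] at hi; omega
    exact_mod_cast this
  have hPm : P.Monic := by
    rw [hP]; exact Polynomial.monic_X_pow_sub hdegsum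
  have hPdeg : P.degree = (k : WithBot ℕ) := by
    rw [hP, Polynomial.degree_sub_eq_left_of_degree_lt (by rw [Polynomial.degree_X_pow]; exact hdegsum)]
    exact Polynomial.degree_X_pow k
  have hPnd : P.natDegree = k := Polynomial.natDegree_eq_of_degree_eq_some hPdeg
  have hPcoeff : ∀ j, j < k → P.coeff j = -(c (k - j) : ℤ) := by
    intro j hj
    rw [hP, Polynomial.coeff_sub, Polynomial.coeff_X_pow, if_neg (by omega)]
    rw [Polynomial.finset_sum_coeff]
    rw [Finset.sum_eq_single (k - j)]
    · rw [Polynomial.coeff_C_mul, Polynomial.coeff_X_pow, if_pos (by omega)]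
      ring
    · intro i hi hik
      rw [Polynomial.coeff_C_mul, Polynomial.coeff_X_pow, if_neg, mul_zero]
      simp only [Finset.mem_Icc] at hi
      omega
    · intro h
      exact absurd (by simp only [Finset.mem_Icc]; omega) h
  -- real root identity
  have hrk : r ^ k = ∑ i ∈ Finset.Icc 1 k, (c i : ℝ) * r ^ (k - i) := by
    have := hroot
    rw [hP] at this
    simp only [map_sub, map_sum, map_mul, map_pow, Polynomial.aeval_X, Polynomial.aeval_C] at this
    have h2 : r ^ k - ∑ i ∈ Finset.Icc 1 k, (c i : ℝ) * r ^ (k - i) = 0 := by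
      simpa using this
    linarith
  -- the polynomial Γ
  set G : Polynomial ℤ := ∑ i ∈ Finset.Icc 1 m, C (γ i) * X ^ (m - i) with hG
  have hGcoeff : ∀ i, 1 ≤ i → i ≤ m → G.coeff (m - i) = γ i := by
    intro i h1 h2
    rw [hG, Polynomial.finset_sum_coeff]
    rw [Finset.sum_eq_single i]
    · rw [Polynomial.coeff_C_mul, Polynomial.coeff_X_pow, if_pos rfl, mul_one]
    · intro j hj hji
      rw [Polynomial.coeff_C_mul, Polynomial.coeff_X_pow, if_neg, mul_zero]
      simp only [Finset.mem_Icc] at hj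
      omega
    · intro h
      exact absurd (by simp only [Finset.mem_Icc]; omega) h
  have hGdeg : G.natDegree ≤ m - 1 := by
    rw [hG]
    apply Polynomial.natDegree_sum_le_of_forall_le
    intro i hi
    apply le_trans (Polynomial.natDegree_C_mul_le _ _)
    rw [Polynomial.natDegree_X_pow]
    simp only [Finset.mem_Icc] at hi
    omega
  have hGm : G.Monic := by
    apply Polynomial.monic_of_natDegree_le_of_coeff_eq_one (m - 1) hGdeg
    have := hGcoeff 1 le_rfl hm
    rwa [hγ1] at this
  have hGnd : G.natDegree = m - 1 := by
    apply le_antisymm hGdeg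
    apply Polynomial.le_natDegree_of_ne_zero
    have := hGcoeff 1 le_rfl hm
    rw [hγ1] at this
    rw [this]
    exact one_ne_zero
  -- the remainder sequence
  set R : ℕ → Polynomial ℤ := fun T => (G * X ^ T) %ₘ P with hR
  have hRdeg : ∀ T, (R T).degree < (k : WithBot ℕ) := by
    intro T
    rw [hR, ← hPdeg]
    exact Polynomial.degree_modByMonic_lt _ hPm
  have hRnd : ∀ T, (R T).natDegree < k := by
    intro T
    rcases eq_or_ne (R T) 0 with h | h
    · rw [h, Polynomial.natDegree_zero]; omega
    · exact (Polynomial.natDegree_lt_iff_degree_lt h).mpr (hRdeg T)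
  have hRdvd : ∀ T, P ∣ (G * X ^ T - R T) := by
    intro T
    refine ⟨(G * X ^ T) /ₘ P, ?_⟩
    have := Polynomial.modByMonic_add_div (G * X ^ T) P
    linear_combination -this
  have hzeroW : ∀ W : Polynomial ℤ, P ∣ W → W.degree < (k : WithBot ℕ) → W = 0 := by
    intro W h1 h2
    exact Polynomial.eq_zero_of_dvd_of_degree_lt h1 (by rw [hPdeg]; exact h2)
  -- k-step recurrence for R
  have hml : ∀ T, R (T + k) = ∑ i ∈ Finset.Icc 1 k, C (c i : ℤ) * R (T + k - i) := by
    intro T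
    have hE : G * X ^ T * P = G * X ^ (T + k)
        - ∑ i ∈ Finset.Icc 1 k, C (c i : ℤ) * (G * X ^ (T + k - i)) := by
      rw [hP, mul_sub]
      congr 1
      · rw [pow_add]; ring
      · rw [Finset.mul_sum]
        apply Finset.sum_congr rfl
        intro i hi
        have h : T + k - i = T + (k - i) := by
          simp only [Finset.mem_Icc] at hi; omega
        rw [h, pow_add]; ring
    have hdvdW : P ∣ (R (T + k) - ∑ i ∈ Finset.Icc 1 k, C (c i : ℤ) * R (T + k - i)) := by
      have h0 := hRdvd (T + k)
      have hs : P ∣ ∑ i ∈ Finset.Icc 1 k,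
          C (c i : ℤ) * (G * X ^ (T + k - i) - R (T + k - i)) :=
        Finset.dvd_sum (fun i _ => Dvd.dvd.mul_left (hRdvd (T + k - i)) _)
      have hdvdE : P ∣ G * X ^ T * P := Dvd.dvd.mul_left dvd_rfl _
      have key : R (T + k) - ∑ i ∈ Finset.Icc 1 k, C (c i : ℤ) * R (T + k - i)
          = (G * X ^ (T + k) - R (T + k)) * (-1)
            + ∑ i ∈ Finset.Icc 1 k, C (c i : ℤ) * (G * X ^ (T + k - i) - R (T + k - i)) * (-1) * (-1)
            + G * X ^ T * P := by
        rw [hE]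
        simp only [mul_neg_one, neg_neg, mul_sub]
        rw [Finset.sum_sub_distrib]
        ring
      rw [key]
      exact dvd_add (dvd_add (h0.mul_right _) (by
        simpa using hs.mul_right ((-1 : Polynomial ℤ) * (-1)))) hdvdE
    have hdegW : (R (T + k) - ∑ i ∈ Finset.Icc 1 k, C (c i : ℤ) * R (T + k - i)).degree
        < (k : WithBot ℕ) := by
      apply lt_of_le_of_lt (Polynomial.degree_sub_le _ _)
      rw [max_lt_iff]
      constructor
      · exact hRdeg _
      · apply lt_of_le_of_lt (Polynomial.degree_sum_le _ _)
        rw [Finset.sup_lt_iff (by exact WithBot.bot_lt_coe k)]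
        intro i _
        calc (C (c i : ℤ) * R (T + k - i)).degree ≤ (C (c i : ℤ)).degree + (R (T + k - i)).degree :=
              Polynomial.degree_mul_le _ _
          _ ≤ 0 + (R (T + k - i)).degree := by
              exact add_le_add_left Polynomial.degree_C_le _
          _ = (R (T + k - i)).degree := by rw [zero_add]
          _ < (k : WithBot ℕ) := hRdeg _
    have := hzeroW _ hdvdW hdegW
    have h2 : R (T + k) - ∑ i ∈ Finset.Icc 1 k, C (c i : ℤ) * R (T + k - i) = 0 := this
    linear_combination h2
    -- one-step recurrence
  have h1step : ∀ T, R (T + 1) = X * R T - C ((R T).coeff (k - 1)) * P := by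
    intro T
    have hXG : X * (G * X ^ T) = G * X ^ (T + 1) := by rw [pow_succ]; ring
    have hdvdW : P ∣ (X * R T - C ((R T).coeff (k - 1)) * P - R (T + 1)) := by
      have h1 : P ∣ X * (G * X ^ T - R T) := (hRdvd T).mul_left X
      have h2 := hRdvd (T + 1)
      have key : X * R T - C ((R T).coeff (k - 1)) * P - R (T + 1)
          = (G * X ^ (T + 1) - R (T + 1)) - X * (G * X ^ T - R T)
            - C ((R T).coeff (k - 1)) * P := by
        rw [← hXG]; ring
      rw [key]
      exact dvd_sub (dvd_sub h2 h1) (Dvd.dvd.mul_left dvd_rfl _)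
    have hdegW : (X * R T - C ((R T).coeff (k - 1)) * P - R (T + 1)).degree
        < (k : WithBot ℕ) := by
      rw [Polynomial.degree_lt_iff_coeff_zero]
      intro M hM
      have hMk : k ≤ M := by exact_mod_cast hM
      rw [Polynomial.coeff_sub, Polynomial.coeff_sub]
      have hc3 : (R (T + 1)).coeff M = 0 :=
        Polynomial.coeff_eq_zero_of_natDegree_lt (lt_of_lt_of_le (hRnd (T + 1)) hMk)
      have hc1 : (X * R T).coeff M = (R T).coeff (M - 1) := by
        have hM1 : M = (M - 1) + 1 := by omega
        rw [hM1, Polynomial.coeff_X_mul]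
        exact congrArg _ (by omega)
      have hc2 : (C ((R T).coeff (k - 1)) * P).coeff M = (R T).coeff (k - 1) * P.coeff M := by
        rw [Polynomial.coeff_C_mul]
      rcases eq_or_lt_of_le hMk with hEq | hLt
      · rw [hc1, hc2, hc3, ← hEq]
        have : P.coeff k = 1 := by
          have := hPm.coeff_natDegree
          rwa [hPnd] at this
        rw [this, mul_one]
        ring
      · rw [hc1, hc2, hc3]
        have h1 : (R T).coeff (M - 1) = 0 :=
          Polynomial.coeff_eq_zero_of_natDegree_lt (by have := hRnd T; omega)
        have h2 : P.coeff M = 0 :=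
          Polynomial.coeff_eq_zero_of_natDegree_lt (by omega)
        rw [h1, h2]; ring
    have := hzeroW _ hdvdW hdegW
    linear_combination -this
  -- coefficientwise recurrence
  have hscoeff : ∀ T j, j + 1 < k →
      (R (T + 1)).coeff (j + 1) = (R T).coeff j + (c (k - j - 1) : ℤ) * (R T).coeff (k - 1) := by
    intro T j hj
    rw [h1step T, Polynomial.coeff_sub, Polynomial.coeff_X_mul, Polynomial.coeff_C_mul]
    rw [hPcoeff (j + 1) hj]
    have : k - (j + 1) = k - j - 1 := by omega
    rw [this]; ring
  -- evaluation identity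
  set Γr : ℝ := ∑ i ∈ Finset.Icc 1 m, (γ i : ℝ) * r ^ (m - i) with hΓr
  have heval : ∀ T, Polynomial.aeval r (R T) = Γr * r ^ T := by
    intro T
    obtain ⟨q, hq⟩ := hRdvd T
    have h1 : Polynomial.aeval r (G * X ^ T) - Polynomial.aeval r (R T)
        = Polynomial.aeval r P * Polynomial.aeval r q := by
      rw [← map_mul, ← map_sub, hq]
    rw [hroot, zero_mul] at h1
    have h2 : Polynomial.aeval r (G * X ^ T) = Γr * r ^ T := by
      rw [map_mul, map_pow, Polynomial.aeval_X, hG, hΓr]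
      congr 1
      rw [map_sum]
      apply Finset.sum_congr rfl
      intro i _
      rw [map_mul, map_pow, Polynomial.aeval_X, Polynomial.aeval_C]
      norm_num
    linarith [h1, h2]
    -- complex versions
  set rC : ℂ := ((r : ℝ) : ℂ) with hrC
  have hrC0 : rC ≠ 0 := by
    rw [hrC]; simp only [ne_eq, Complex.ofReal_eq_zero]; exact hr.ne'
  set PC : Polynomial ℂ := P.map (Int.castRingHom ℂ) with hPC
  have hPCm : PC.Monic := hPm.map _
  have hPCnd : PC.natDegree = k := by rw [hPC, hPm.natDegree_map, hPnd]
  have hPCeq : PC = X ^ k - ∑ i ∈ Finset.Icc 1 k, C ((c i : ℂ)) * X ^ (k - i) := by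
    rw [hPC, hP]
    rw [Polynomial.map_sub, Polynomial.map_pow, Polynomial.map_X, Polynomial.map_sum]
    congr 1
    apply Finset.sum_congr rfl
    intro i _
    rw [Polynomial.map_mul, Polynomial.map_pow, Polynomial.map_X, Polynomial.map_C]
    norm_num
  have hofReal : ∀ (p : Polynomial ℤ) (x : ℝ),
      Polynomial.aeval ((x : ℝ) : ℂ) p = ((Polynomial.aeval x p : ℝ) : ℂ) :=
    fun p x => Polynomial.aeval_algHom_apply (Complex.ofRealHom.toIntAlgHom) x p
  have hPCeval : ∀ x : ℂ, PC.eval x = Polynomial.aeval x P := by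
    intro x
    rw [hPC, Polynomial.eval_map, Polynomial.aeval_def]
    rfl
  have hPCroot : PC.IsRoot rC := by
    rw [Polynomial.IsRoot, hPCeval, hrC, hofReal, hroot]
    simp
  set Q : Polynomial ℂ := PC /ₘ (X - C rC) with hQ
  have hfacQ : (X - C rC) * Q = PC := Polynomial.mul_divByMonic_eq_iff_isRoot.mpr hPCroot
  have hQm : Q.Monic := (Polynomial.monic_X_sub_C rC).of_mul_monic_left (by rw [hfacQ]; exact hPCm)
  -- derivative of P at r is positive (times r)
  have hder : 0 < Polynomial.aeval r (Polynomial.derivative P) * r := by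
    have hD : Polynomial.aeval r (Polynomial.derivative P) * r
        = (k : ℝ) * r ^ k - ∑ i ∈ Finset.Icc 1 k, (c i : ℝ) * ((k - i : ℕ) : ℝ) * r ^ (k - i) := by
      rw [hP, Polynomial.derivative_sub, Polynomial.derivative_X_pow, Polynomial.derivative_sum]
      rw [map_sub]
      rw [sub_mul]
      congr 1
      · rw [map_mul, Polynomial.aeval_C, map_pow, Polynomial.aeval_X]
        have : r ^ (k - 1) * r = r ^ k := by
          rw [← pow_succ]; congr 1; omega
        push_cast
        rw [mul_assoc, this]
      · rw [map_sum, Finset.sum_mul]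
        apply Finset.sum_congr rfl
        intro i hi
        simp only [Finset.mem_Icc] at hi
        rw [Polynomial.derivative_C_mul, Polynomial.derivative_X_pow]
        rw [map_mul, Polynomial.aeval_C, map_mul, Polynomial.aeval_C, map_pow, Polynomial.aeval_X]
        rcases eq_or_lt_of_le hi.2 with hik | hik
        · subst hik
          simp [Nat.sub_self]
        · have h1 : r ^ (k - i - 1) * r = r ^ (k - i) := by
            rw [← pow_succ]; congr 1; omega
          push_cast
          rw [mul_assoc, mul_assoc, h1]
          ring
    have hsum : (k : ℝ) * r ^ k - ∑ i ∈ Finset.Icc 1 k, (c i : ℝ) * ((k - i : ℕ) : ℝ) * r ^ (k - i)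
        = ∑ i ∈ Finset.Icc 1 k, (i : ℝ) * (c i : ℝ) * r ^ (k - i) := by
      rw [hrk, Finset.mul_sum, ← Finset.sum_sub_distrib]
      apply Finset.sum_congr rfl
      intro i hi
      simp only [Finset.mem_Icc] at hi
      have : ((k - i : ℕ) : ℝ) = (k : ℝ) - (i : ℝ) := by
        have : i ≤ k := hi.2
        push_cast [this]
        ring
      rw [this]; ring
    rw [hD, hsum]
    apply Finset.sum_pos'
    · intro i hi
      positivity
    · refine ⟨k, hkmem, ?_⟩
      have h1 : (0:ℝ) < (k:ℝ) := by exact_mod_cast hk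
      have h2 : (0:ℝ) < (c k : ℝ) := by exact_mod_cast hck
      positivity
  have hQevalr : Q.eval rC ≠ 0 := by
    have hderiv : Polynomial.derivative PC = Q + (X - C rC) * Polynomial.derivative Q := by
      rw [← hfacQ, Polynomial.derivative_mul]
      simp [Polynomial.derivative_X_sub_C]
    have h1 : (Polynomial.derivative PC).eval rC = Q.eval rC := by
      rw [hderiv]
      simp
    have h2 : (Polynomial.derivative PC).eval rC
        = ((Polynomial.aeval r (Polynomial.derivative P) : ℝ) : ℂ) := by
      rw [hPC, Polynomial.derivative_map, Polynomial.eval_map]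
      have heq2 : Polynomial.eval₂ (Int.castRingHom ℂ) rC (Polynomial.derivative P)
          = Polynomial.aeval rC (Polynomial.derivative P) := by
        rw [Polynomial.aeval_def]
        norm_num [algebraMap_int_eq]
      rw [heq2, hrC, hofReal]
    rw [h2] at h1
    rw [← h1]
    simp only [ne_eq, Complex.ofReal_eq_zero]
    intro h0
    rw [h0] at hder
    simp at hder
  -- roots of Q are strictly dominated
  have hQroots : ∀ z ∈ Q.roots, ‖z‖ < r := by
    intro z hz
    have hzQ : Q.eval z = 0 := (Polynomial.mem_roots hQm.ne_zero).mp hz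
    have hzPC : PC.eval z = 0 := by
      rw [← hfacQ, Polynomial.eval_mul, hzQ, mul_zero]
    have hzne : z ≠ rC := by
      intro h0; rw [h0] at hzQ; exact hQevalr hzQ
    have hzk : z ^ k = ∑ i ∈ Finset.Icc 1 k, (c i : ℂ) * z ^ (k - i) := by
      rw [hPCeq] at hzPC
      simp only [Polynomial.eval_sub, Polynomial.eval_pow, Polynomial.eval_X,
        Polynomial.eval_finset_sum, Polynomial.eval_mul, Polynomial.eval_C] at hzPC
      have : ∑ i ∈ Finset.Icc 1 k, (c i : ℂ) * z ^ (k - i)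
          = ∑ i ∈ Finset.Icc 1 k, (c i : ℂ) * (z ^ (k - i)) := rfl
      linear_combination hzPC
    exact dominance k hk c hck hgcd r hr hrk z hzk (by rwa [hrC] at hzne)
    -- complex coefficient sequences
  set σ : ℕ → ℕ → ℂ := fun j T => (((R T).coeff j : ℤ) : ℂ) with hσ
  have hseq : ∀ j T, (Polynomial.aeval shiftE PC) (σ j) T = 0 := by
    intro j T
    have e1 : (Polynomial.aeval shiftE PC) (σ j)
        = (Polynomial.aeval shiftE (X ^ k : ℂ[X])) (σ j)
          - ∑ i ∈ Finset.Icc 1 k, (Polynomial.aeval shiftE (C ((c i : ℂ)) * X ^ (k - i))) (σ j) := by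
      rw [hPCeq, map_sub, map_sum, LinearMap.sub_apply, LinearMap.sum_apply]
    rw [e1, Pi.sub_apply, Finset.sum_apply, aeval_shiftE_X_pow]
    have e2 : ∀ i ∈ Finset.Icc 1 k,
        (Polynomial.aeval shiftE (C ((c i : ℂ)) * X ^ (k - i))) (σ j) T
          = (c i : ℂ) * σ j (T + k - i) := by
      intro i hi
      rw [aeval_shiftE_C_mul_X_pow]
      congr 2
      simp only [Finset.mem_Icc] at hi
      omega
    rw [Finset.sum_congr rfl e2]
    have hco := congrArg (fun p => Polynomial.coeff p j) (hml T)
    simp only [Polynomial.finset_sum_coeff, Polynomial.coeff_C_mul] at hco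
    simp only [hσ]
    rw [hco]
    push_cast
    rw [sub_eq_zero]
  have hgeom : ∀ j T, (Polynomial.aeval shiftE Q) (σ j) T
      = (Polynomial.aeval shiftE Q) (σ j) 0 * rC ^ T := by
    intro j
    have hwrec : ∀ T, (Polynomial.aeval shiftE Q) (σ j) (T + 1)
        = rC * (Polynomial.aeval shiftE Q) (σ j) T := by
      intro T
      have h0 : (Polynomial.aeval shiftE PC) (σ j) T = 0 := hseq j T
      rw [← hfacQ, map_mul] at h0
      have h0' : (Polynomial.aeval shiftE (X - C rC)) ((Polynomial.aeval shiftE Q) (σ j)) T = 0 := h0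
      rw [aeval_shiftE_X_sub_C] at h0'
      linear_combination h0'
    intro T
    induction T with
    | zero => simp
    | succ T ih => rw [hwrec T, ih, pow_succ]; ring
  -- convergence of normalized coefficients
  have hconv : ∀ j, ∃ l : ℝ, Filter.Tendsto
      (fun T => (((R T).coeff j : ℤ) : ℝ) / r ^ T) Filter.atTop (nhds l) := by
    intro j
    have hwt : Filter.Tendsto (fun T => (Polynomial.aeval shiftE Q) (σ j) T / ((r : ℝ) : ℂ) ^ T)
        Filter.atTop (nhds ((Polynomial.aeval shiftE Q) (σ j) 0)) := by
      have he : (fun T => (Polynomial.aeval shiftE Q) (σ j) T / ((r : ℝ) : ℂ) ^ T)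
          = fun _ => (Polynomial.aeval shiftE Q) (σ j) 0 := by
        funext T
        rw [hgeom j T]
        rw [hrC] at *
        field_simp
      rw [he]
      exact tendsto_const_nhds
    have hB := lemmaB r hr Q.natDegree Q hQm rfl hQroots (σ j)
      ((Polynomial.aeval shiftE Q) (σ j) 0) hwt
    refine ⟨((Polynomial.aeval shiftE Q) (σ j) 0 / Q.eval ((r : ℝ) : ℂ)).re, ?_⟩
    have hre := (Complex.continuous_re.tendsto _).comp hB
    have heq : (fun T => (((R T).coeff j : ℤ) : ℝ) / r ^ T)
        = fun T => (σ j T / ((r : ℝ) : ℂ) ^ T).re := by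
      funext T
      have h1 : σ j T / ((r : ℝ) : ℂ) ^ T
          = (((((R T).coeff j : ℤ) : ℝ) / r ^ T : ℝ) : ℂ) := by
        simp only [hσ]
        push_cast
        ring
      rw [h1, Complex.ofReal_re]
    rw [heq]
    exact hre
  choose lam hlam using hconv
  -- shifted limits
  have hlim1 : ∀ j, Filter.Tendsto (fun T => (((R (T + 1)).coeff j : ℤ) : ℝ) / r ^ T)
      Filter.atTop (nhds (r * lam j)) := by
    intro j
    have h1 : Filter.Tendsto (fun T => (((R (T + 1)).coeff j : ℤ) : ℝ) / r ^ (T + 1))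
        Filter.atTop (nhds (lam j)) :=
      (Filter.tendsto_add_atTop_iff_nat 1).mpr (hlam j)
    have h2 := h1.const_mul r
    have he : (fun T => r * ((((R (T + 1)).coeff j : ℤ) : ℝ) / r ^ (T + 1)))
        = fun T => (((R (T + 1)).coeff j : ℤ) : ℝ) / r ^ T := by
      funext T
      rw [pow_succ]
      field_simp
    rw [he] at h2
    exact h2
  -- limit relations
  have hrel : ∀ j, j + 1 < k →
      r * lam (j + 1) = lam j + (c (k - j - 1) : ℝ) * lam (k - 1) := by
    intro j hj
    have hL := hlim1 (j + 1)
    have hRt : Filter.Tendsto (fun T => (((R (T + 1)).coeff (j + 1) : ℤ) : ℝ) / r ^ T)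
        Filter.atTop (nhds (lam j + (c (k - j - 1) : ℝ) * lam (k - 1))) := by
      have h3 := (hlam j).add ((hlam (k - 1)).const_mul ((c (k - j - 1) : ℝ)))
      have he : (fun T => (((R T).coeff j : ℤ) : ℝ) / r ^ T
          + (c (k - j - 1) : ℝ) * ((((R T).coeff (k - 1) : ℤ) : ℝ) / r ^ T))
          = fun T => (((R (T + 1)).coeff (j + 1) : ℤ) : ℝ) / r ^ T := by
        funext T
        rw [hscoeff T j hj]
        push_cast
        ring
      rw [he] at h3
      exact h3
    exact tendsto_nhds_unique hL hRt
    -- downward induction: lam j in terms of lam (k-1)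
  have hA : ∀ d, d ≤ k - 1 → lam (k - 1 - d) * r ^ (k - d)
      = lam (k - 1) * ∑ i ∈ Finset.Icc (d + 1) k, (c i : ℝ) * r ^ (k - i) := by
    intro d
    induction d with
    | zero =>
      intro _
      simp only [Nat.sub_zero, Nat.zero_add]
      rw [← hrk]
    | succ d ih =>
      intro hd
      have hd' : d ≤ k - 1 := by omega
      have ihd := ih hd'
      have hrel' := hrel (k - 2 - d) (by omega)
      have e1 : k - 2 - d + 1 = k - 1 - d := by omega
      have e2 : k - (k - 2 - d) - 1 = d + 1 := by omega
      rw [e1, e2] at hrel'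
      have e3 : k - 1 - (d + 1) = k - 2 - d := by omega
      have e4 : k - (d + 1) = k - d - 1 := by omega
      rw [e3, e4]
      have hsplit : ∑ i ∈ Finset.Icc (d + 1) k, (c i : ℝ) * r ^ (k - i)
          = (c (d + 1) : ℝ) * r ^ (k - (d + 1))
            + ∑ i ∈ Finset.Icc (d + 2) k, (c i : ℝ) * r ^ (k - i) := by
        rw [← Finset.add_sum_erase _ _ (show d + 1 ∈ Finset.Icc (d + 1) k by
          simp only [Finset.mem_Icc]; omega)]
        congr 1
        rw [Finset.Icc_erase_left]
        refine Finset.sum_congr ?_ (fun _ _ => rfl)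
        ext x; simp only [Finset.mem_Ioc, Finset.mem_Icc]; omega
      have hpow : r * r ^ (k - d - 1) = r ^ (k - d) := by
        rw [← pow_succ']
        congr 1
        omega
      have hlam2 : lam (k - 2 - d) = r * lam (k - 1 - d) - (c (d + 1) : ℝ) * lam (k - 1) := by
        linarith [hrel']
      rw [hsplit, e4] at ihd
      rw [hlam2]
      linear_combination lam (k - 1 - d) * hpow + ihd
  -- sum identity for limits
  have hsum : ∑ j ∈ Finset.range k, lam j * r ^ j = Γr := by
    have h1 : Filter.Tendsto
        (fun T => ∑ j ∈ Finset.range k, ((((R T).coeff j : ℤ) : ℝ) / r ^ T) * r ^ j)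
        Filter.atTop (nhds (∑ j ∈ Finset.range k, lam j * r ^ j)) := by
      apply tendsto_finset_sum
      intro j _
      exact (hlam j).mul_const _
    have h2 : (fun T => ∑ j ∈ Finset.range k, ((((R T).coeff j : ℤ) : ℝ) / r ^ T) * r ^ j)
        = fun _ => Γr := by
      funext T
      have h3 : Polynomial.aeval r (R T) = ∑ j ∈ Finset.range k, (((R T).coeff j : ℤ) : ℝ) * r ^ j := by
        rw [Polynomial.aeval_eq_sum_range' (hRnd T)]
        apply Finset.sum_congr rfl
        intro j _
        rw [zsmul_eq_mul]
      have h4 := heval T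
      rw [h3] at h4
      have h5 : ∑ j ∈ Finset.range k, ((((R T).coeff j : ℤ) : ℝ) / r ^ T) * r ^ j
          = (∑ j ∈ Finset.range k, (((R T).coeff j : ℤ) : ℝ) * r ^ j) / r ^ T := by
        rw [Finset.sum_div]
        apply Finset.sum_congr rfl
        intro j _
        ring
      rw [h5, h4]
      field_simp
    rw [h2] at h1
    exact tendsto_nhds_unique h1 tendsto_const_nhds
  -- positivity of limits
  have hSpos : ∀ d, d ≤ k - 1 → 0 < ∑ i ∈ Finset.Icc (d + 1) k, (c i : ℝ) * r ^ (k - i) := by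
    intro d hd
    have hkm : k ∈ Finset.Icc (d + 1) k := by simp only [Finset.mem_Icc]; omega
    have hle := Finset.single_le_sum (f := fun i => (c i : ℝ) * r ^ (k - i))
      (fun i _ => by positivity) hkm
    have hck' : (0:ℝ) < (c k : ℝ) * r ^ (k - k) := by
      have : (0:ℝ) < (c k : ℝ) := by exact_mod_cast hck
      positivity
    have hle' : (c k : ℝ) * r ^ (k - k) ≤ ∑ i ∈ Finset.Icc (d + 1) k, (c i : ℝ) * r ^ (k - i) := hle
    linarith
  have hlamk : 0 < lam (k - 1) := by
    by_contra hneg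
    push_neg at hneg
    have hall : ∀ j, j < k → lam j ≤ 0 := by
      intro j hj
      have hd : k - 1 - j ≤ k - 1 := by omega
      have hAj := hA (k - 1 - j) hd
      have e : k - 1 - (k - 1 - j) = j := by omega
      rw [e] at hAj
      have hS := hSpos (k - 1 - j) hd
      have hrp : (0:ℝ) < r ^ (k - (k - 1 - j)) := pow_pos hr _
      nlinarith [hAj, hS, hrp]
    have hsn : ∑ j ∈ Finset.range k, lam j * r ^ j ≤ 0 := by
      apply Finset.sum_nonpos
      intro j hj
      simp only [Finset.mem_range] at hj
      nlinarith [hall j hj, pow_pos hr j]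
    rw [hsum] at hsn
    linarith [hΓ]
  have hlampos : ∀ j, j < k → 0 < lam j := by
    intro j hj
    have hd : k - 1 - j ≤ k - 1 := by omega
    have hAj := hA (k - 1 - j) hd
    have e : k - 1 - (k - 1 - j) = j := by omega
    rw [e] at hAj
    have hS := hSpos (k - 1 - j) hd
    have hrp : (0:ℝ) < r ^ (k - (k - 1 - j)) := pow_pos hr _
    nlinarith [hAj, mul_pos hlamk hS, hrp]
  -- eventual nonnegativity of remainders
  have hevent : ∀ᶠ T in Filter.atTop, ∀ j ∈ Finset.range k, 0 ≤ (R T).coeff j := by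
    rw [Finset.eventually_all]
    intro j hj
    simp only [Finset.mem_range] at hj
    have hpos := hlampos j hj
    have hev := (hlam j).eventually (eventually_gt_nhds hpos)
    filter_upwards [hev] with T hT
    have hrp : (0:ℝ) < r ^ T := pow_pos hr T
    have hcp : (0:ℝ) < (((R T).coeff j : ℤ) : ℝ) := by
      rcases div_pos_iff.mp hT with ⟨h1, _⟩ | ⟨_, h2⟩
      · exact h1
      · linarith
    exact_mod_cast hcp.le
  obtain ⟨T, hTk, hTpos⟩ : ∃ T, k ≤ T ∧ ∀ j ∈ Finset.range k, 0 ≤ (R T).coeff j := by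
    obtain ⟨T, h⟩ := ((Filter.eventually_ge_atTop k).and hevent).exists
    exact ⟨T, h.1, h.2⟩
  -- final construction
  have hGXnd : (G * X ^ T).natDegree = (m - 1) + T := by
    rw [Polynomial.natDegree_mul hGm.ne_zero (pow_ne_zero T Polynomial.X_ne_zero)]
    rw [hGnd, Polynomial.natDegree_X_pow]
  have hGXm : (G * X ^ T).Monic := hGm.mul (Polynomial.monic_X_pow T)
  have hRltGX : (R T).natDegree < (G * X ^ T).natDegree := by
    rw [hGXnd]
    have := hRnd T
    omega
  have hpnd : (G * X ^ T - R T).natDegree = T + (m - 1) := by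
    rw [Polynomial.natDegree_sub_eq_left_of_natDegree_lt hRltGX, hGXnd]
    omega
  have hmonic : (G * X ^ T - R T).Monic := by
    unfold Polynomial.Monic
    rw [Polynomial.leadingCoeff, hpnd, Polynomial.coeff_sub]
    have h1 : (G * X ^ T).coeff (T + (m - 1)) = 1 := by
      have := hGXm.coeff_natDegree
      rwa [hGXnd, add_comm (m-1) T] at this
    have h2 : (R T).coeff (T + (m - 1)) = 0 :=
      Polynomial.coeff_eq_zero_of_natDegree_lt (by have := hRnd T; omega)
    rw [h1, h2]
    ring
  refine ⟨G * X ^ T - R T, T + (m - 1), by omega, hmonic, hpnd, hRdvd T, ?_, ?_⟩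
  · intro i h1 h2
    have e : T + (m - 1) + 1 - i = (m - i) + T := by omega
    rw [e, Polynomial.coeff_sub]
    have hg : (G * X ^ T).coeff ((m - i) + T) = γ i := by
      rw [Polynomial.coeff_mul_X_pow]
      exact hGcoeff i h1 h2
    have hrz : (R T).coeff ((m - i) + T) = 0 :=
      Polynomial.coeff_eq_zero_of_natDegree_lt (by have := hRnd T; omega)
    rw [hg, hrz]
    ring
  · intro j hjm
    have hjT : j < T := by omega
    rw [Polynomial.coeff_sub]
    have hg : (G * X ^ T).coeff j = 0 := by
      rw [Polynomial.coeff_mul_X_pow', if_neg (by omega)]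
    rw [hg, zero_sub]
    rcases lt_or_ge j k with hjk | hjk
    · have := hTpos j (Finset.mem_range.mpr hjk)
      omega
    · have hz : (R T).coeff j = 0 :=
        Polynomial.coeff_eq_zero_of_natDegree_lt (lt_of_lt_of_le (hRnd T) hjk)
      rw [hz]
      simp
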